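/- Let d ≥ 2 and m ≥ 1 be integers with (d−1) dividing (m+1), and set a = (m+1)/(d−1). Let p be a prime dividing d and t = ν_p(d). Let n ≥ 1 be an integer with m ≤ d^{n+1} − 3. Then ν_p(B(d,m,n)) ≥ −(ν_p(a!) + t·a); that is, either B(d,m,n) = 0 or the p-adic valuation of the rational number B(d,m,n) is at least −(ν_p(a!) + t·a). -/

import Mathlib

/-- Generalized binomial coefficient `C_j(x) = x(x-1)⋯(x-j+1)/j!`, with `C_0(x) = 1`. -/
noncomputable def genBinom (x : ℚ) (j : ℕ) : ℚ :=
  (∏ i ∈ Finset.range j, (x - (i : ℚ))) / (Nat.factorial j : ℚ)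

/-- The Ewing–Schober combinatorial formula `B(d,m,n)`: the sum is over all tuples
`(j_1,…,j_n)` of nonnegative integers (here `j : Fin n → ℕ`, 0-indexed, so `j k`
corresponds to `j_{k+1}`) satisfying `Σ_{k=1}^n (d^{n-k+1} - 1) j_k = m + 1`, of
`Π_{k=1}^n C_{j_k}(m/d^{n-k+1} - Σ_{l=1}^{k-1} d^{k-l} j_l)`, multiplied by `-(1/m)`. -/
noncomputable def multibrotB (d m n : ℕ) : ℚ :=
  -(1 / (m : ℚ)) * ∑ᶠ j : Fin n → ℕ,
    if (∑ k : Fin n, (d ^ (n - k.val) - 1) * j k) = m + 1 then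
      ∏ k : Fin n,
        genBinom ((m : ℚ) / (d : ℚ) ^ (n - k.val)
          - ∑ l ∈ Finset.univ.filter (fun l : Fin n => l < k),
              (d : ℚ) ^ (k.val - l.val) * ((j l : ℕ) : ℚ)) (j k)
    else 0


lemma padicNorm_natCast (p : ℕ) [Fact p.Prime] {d : ℕ} (hd : d ≠ 0) :
    padicNorm p (d : ℚ) = (p:ℚ) ^ (-(padicValNat p d : ℤ)) := by
  rw [padicNorm.eq_zpow_of_nonzero (by exact_mod_cast hd), padicValRat.of_nat]

lemma padicNorm_prod (p : ℕ) [Fact p.Prime] {ι : Type*} (s : Finset ι) (f : ι → ℚ) :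
    padicNorm p (∏ i ∈ s, f i) = ∏ i ∈ s, padicNorm p (f i) := by
  classical
  induction s using Finset.cons_induction with
  | empty => simp [padicNorm.one]
  | cons i s hi ih => rw [Finset.prod_cons, padicNorm.mul, ih, Finset.prod_cons]

lemma zpow_finset_sum {a : ℚ} (ha : a ≠ 0) {ι : Type*} (s : Finset ι) (f : ι → ℤ) :
    a ^ (∑ i ∈ s, f i) = ∏ i ∈ s, a ^ f i := by
  classical
  induction s using Finset.cons_induction with
  | empty => simp
  | cons i s hi ih => rw [Finset.sum_cons, zpow_add₀ ha, ih, Finset.prod_cons]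

section Term
variable (d m n p t : ℕ) [Fact p.Prime]

-- norm of (X k - c) where X k is the argument
lemma normX (hd : 2 ≤ d) (j : Fin n → ℕ) (k : Fin n) (c : ℕ) :
    padicNorm p ((m : ℚ) / (d : ℚ) ^ (n - k.val)
          - ∑ l ∈ Finset.univ.filter (fun l : Fin n => l < k),
              (d : ℚ) ^ (k.val - l.val) * ((j l : ℕ) : ℚ) - (c : ℚ))
      ≤ (p:ℚ) ^ (((n - k.val) * padicValNat p d : ℕ) : ℤ) := by
  have hd0 : d ≠ 0 := by omega
  have hdQ : (d:ℚ) ≠ 0 := by exact_mod_cast hd0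
  have hp0 : (p:ℚ) ≠ 0 := by exact_mod_cast (Fact.out : p.Prime).ne_zero
  set e : ℕ := n - k.val
  set σ : ℕ := ∑ l ∈ Finset.univ.filter (fun l : Fin n => l < k), d ^ (k.val - l.val) * j l
    with hσ
  have hcast : (m : ℚ) / (d : ℚ) ^ e
          - (∑ l ∈ Finset.univ.filter (fun l : Fin n => l < k),
              (d : ℚ) ^ (k.val - l.val) * ((j l : ℕ) : ℚ)) - (c : ℚ)
      = (((m : ℤ) - ((σ + c : ℕ) : ℤ) * (d:ℤ) ^ e : ℤ) : ℚ) / (d : ℚ) ^ e := by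
    have hσc : ((σ : ℕ) : ℚ) = ∑ l ∈ Finset.univ.filter (fun l : Fin n => l < k),
        (d : ℚ) ^ (k.val - l.val) * ((j l : ℕ) : ℚ) := by
      rw [hσ]; push_cast; ring
    rw [← hσc]
    push_cast
    field_simp
    ring
  rw [hcast, padicNorm.div]
  have hden : padicNorm p ((d:ℚ) ^ e) = (p:ℚ) ^ (-((e * padicValNat p d : ℕ) : ℤ)) := by
    have h1 : ((d:ℚ) ^ e) = ((d ^ e : ℕ) : ℚ) := by push_cast; ring
    rw [h1, padicNorm_natCast p (pow_ne_zero e hd0), padicValNat.pow d e]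
  rw [hden]
  rw [div_le_iff₀ (by positivity)]
  rw [← zpow_add₀ hp0]
  simp only [add_neg_cancel, zpow_zero]
  exact padicNorm.of_int _

end Term

section Term2
variable (d m n p t : ℕ) [Fact p.Prime]

lemma normX0 (hd : 2 ≤ d) (hm : 1 ≤ m) (j : Fin n → ℕ) (k : Fin n)
    (hk : ∀ l : Fin n, l < k → j l = 0) :
    padicNorm p ((m : ℚ) / (d : ℚ) ^ (n - k.val)
          - ∑ l ∈ Finset.univ.filter (fun l : Fin n => l < k),
              (d : ℚ) ^ (k.val - l.val) * ((j l : ℕ) : ℚ))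
      = (p:ℚ) ^ ((((n - k.val) * padicValNat p d : ℕ) : ℤ) - (padicValNat p m : ℤ)) := by
  have hd0 : d ≠ 0 := by omega
  have hp0 : (p:ℚ) ≠ 0 := by exact_mod_cast (Fact.out : p.Prime).ne_zero
  have hzero : ∑ l ∈ Finset.univ.filter (fun l : Fin n => l < k),
      (d : ℚ) ^ (k.val - l.val) * ((j l : ℕ) : ℚ) = 0 := by
    apply Finset.sum_eq_zero
    intro l hl
    rw [Finset.mem_filter] at hl
    rw [hk l hl.2]
    simp
  rw [hzero, sub_zero, padicNorm.div]
  have hden : padicNorm p ((d:ℚ) ^ (n - k.val))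
      = (p:ℚ) ^ (-(((n - k.val) * padicValNat p d : ℕ) : ℤ)) := by
    have h1 : ((d:ℚ) ^ (n - k.val)) = ((d ^ (n - k.val) : ℕ) : ℚ) := by push_cast; ring
    rw [h1, padicNorm_natCast p (pow_ne_zero _ hd0), padicValNat.pow d _]
  rw [hden, padicNorm_natCast p (by omega : m ≠ 0), ← zpow_sub₀ hp0]
  congr 1
  ring

lemma normGB (hd : 2 ≤ d) (hm : 1 ≤ m) (j : Fin n → ℕ) (k : Fin n) :
    padicNorm p (genBinom ((m : ℚ) / (d : ℚ) ^ (n - k.val)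
          - ∑ l ∈ Finset.univ.filter (fun l : Fin n => l < k),
              (d : ℚ) ^ (k.val - l.val) * ((j l : ℕ) : ℚ)) (j k))
      ≤ (p:ℚ) ^ ((((n - k.val) * padicValNat p d * j k
            + padicValNat p (Nat.factorial (j k)) : ℕ)) : ℤ) := by
  have hp0 : (p:ℚ) ≠ 0 := by exact_mod_cast (Fact.out : p.Prime).ne_zero
  set X : ℚ := (m : ℚ) / (d : ℚ) ^ (n - k.val)
          - ∑ l ∈ Finset.univ.filter (fun l : Fin n => l < k),
              (d : ℚ) ^ (k.val - l.val) * ((j l : ℕ) : ℚ) with hX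
  set w : ℕ := (n - k.val) * padicValNat p d with hw
  rw [genBinom, padicNorm.div]
  have hnum : padicNorm p (∏ i ∈ Finset.range (j k), (X - (i:ℚ)))
      ≤ (p:ℚ) ^ ((w * j k : ℕ) : ℤ) := by
    rw [padicNorm_prod]
    calc ∏ i ∈ Finset.range (j k), padicNorm p (X - (i:ℚ))
        ≤ ∏ _i ∈ Finset.range (j k), (p:ℚ) ^ ((w : ℕ) : ℤ) := by
          apply Finset.prod_le_prod
          · intro i _; exact padicNorm.nonneg _
          · intro i _
            exact normX d m n p hd j k i
      _ = (p:ℚ) ^ ((w * j k : ℕ) : ℤ) := by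
          rw [Finset.prod_const, Finset.card_range, ← zpow_natCast]
          rw [← zpow_mul]
          congr 1
  have hden : padicNorm p ((Nat.factorial (j k) : ℚ))
      = (p:ℚ) ^ (-((padicValNat p (Nat.factorial (j k)) : ℕ) : ℤ)) :=
    padicNorm_natCast p (Nat.factorial_ne_zero _)
  rw [hden, div_le_iff₀ (by positivity), ← zpow_add₀ hp0]
  refine le_trans hnum (le_of_eq ?_)
  congr 1
  push_cast
  ring

end Term2

section Term3
variable (d m n p : ℕ) [Fact p.Prime]

lemma normGB0 (hd : 2 ≤ d) (hm : 1 ≤ m) (j : Fin n → ℕ) (k : Fin n)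
    (hk0 : j k ≠ 0) (hk : ∀ l : Fin n, l < k → j l = 0) :
    padicNorm p (genBinom ((m : ℚ) / (d : ℚ) ^ (n - k.val)
          - ∑ l ∈ Finset.univ.filter (fun l : Fin n => l < k),
              (d : ℚ) ^ (k.val - l.val) * ((j l : ℕ) : ℚ)) (j k))
      ≤ (p:ℚ) ^ ((((n - k.val) * padicValNat p d * j k
            + padicValNat p (Nat.factorial (j k)) : ℕ) : ℤ) - (padicValNat p m : ℤ)) := by
  have hp0 : (p:ℚ) ≠ 0 := by exact_mod_cast (Fact.out : p.Prime).ne_zero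
  set X : ℚ := (m : ℚ) / (d : ℚ) ^ (n - k.val)
          - ∑ l ∈ Finset.univ.filter (fun l : Fin n => l < k),
              (d : ℚ) ^ (k.val - l.val) * ((j l : ℕ) : ℚ) with hX
  set w : ℕ := (n - k.val) * padicValNat p d with hw
  obtain ⟨jj, hjj⟩ : ∃ jj, j k = jj + 1 := ⟨j k - 1, by omega⟩
  rw [genBinom, padicNorm.div]
  have hnum : padicNorm p (∏ i ∈ Finset.range (j k), (X - (i:ℚ)))
      ≤ (p:ℚ) ^ (((w * j k : ℕ) : ℤ) - (padicValNat p m : ℤ)) := by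
    rw [hjj, Finset.prod_range_succ', padicNorm.mul]
    have h1 : padicNorm p (∏ i ∈ Finset.range jj, (X - ((i + 1 : ℕ) : ℚ)))
        ≤ (p:ℚ) ^ ((w * jj : ℕ) : ℤ) := by
      rw [padicNorm_prod]
      calc ∏ i ∈ Finset.range jj, padicNorm p (X - ((i + 1 : ℕ) : ℚ))
          ≤ ∏ _i ∈ Finset.range jj, (p:ℚ) ^ ((w : ℕ) : ℤ) := by
            apply Finset.prod_le_prod
            · intro i _; exact padicNorm.nonneg _
            · intro i _; exact normX d m n p hd j k (i+1)
        _ = (p:ℚ) ^ ((w * jj : ℕ) : ℤ) := by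
            rw [Finset.prod_const, Finset.card_range, ← zpow_natCast]
            rw [← zpow_mul]
            congr 1
    have h2 : padicNorm p (X - ((0:ℕ) : ℚ))
        = (p:ℚ) ^ (((w : ℕ) : ℤ) - (padicValNat p m : ℤ)) := by
      rw [Nat.cast_zero, sub_zero, hX]
      exact normX0 d m n p hd hm j k hk
    rw [h2]
    calc padicNorm p (∏ i ∈ Finset.range jj, (X - ((i + 1 : ℕ) : ℚ)))
            * (p:ℚ) ^ (((w : ℕ) : ℤ) - (padicValNat p m : ℤ))
        ≤ (p:ℚ) ^ ((w * jj : ℕ) : ℤ) * (p:ℚ) ^ (((w : ℕ) : ℤ) - (padicValNat p m : ℤ)) := by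
          apply mul_le_mul_of_nonneg_right h1 (by positivity)
      _ = (p:ℚ) ^ (((w * (jj+1) : ℕ) : ℤ) - (padicValNat p m : ℤ)) := by
          rw [← zpow_add₀ hp0]
          congr 1
          push_cast
          ring
  have hden : padicNorm p ((Nat.factorial (j k) : ℚ))
      = (p:ℚ) ^ (-((padicValNat p (Nat.factorial (j k)) : ℕ) : ℤ)) :=
    padicNorm_natCast p (Nat.factorial_ne_zero _)
  rw [hden, div_le_iff₀ (by positivity), ← zpow_add₀ hp0]
  rw [hjj] at hnum ⊢
  refine le_trans hnum (le_of_eq ?_)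
  congr 1
  push_cast
  ring

end Term3

lemma bern_aux (d e : ℕ) (hd : 2 ≤ d) : e * (d-1) + 1 ≤ d ^ e := by
  obtain ⟨c, rfl⟩ : ∃ c, d = c + 2 := ⟨d - 2, by omega⟩
  induction e with
  | zero => simp
  | succ e ih =>
    have h1 : 1 ≤ (c+2) ^ e := Nat.one_le_pow _ _ (by omega)
    have h2 : (c+2) ^ (e+1) = (c+2) ^ e * (c+2) := pow_succ _ e
    have h3 : c + 2 - 1 = c + 1 := by omega
    rw [h3] at ih ⊢
    nlinarith

lemma padicValNat_le_of_dvd (p : ℕ) [Fact p.Prime] {a b : ℕ} (hb : b ≠ 0) (h : a ∣ b) :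
    padicValNat p a ≤ padicValNat p b := by
  rw [← padicValNat_dvd_iff_le hb]
  exact dvd_trans pow_padicValNat_dvd h

section Main
variable (d m n p : ℕ) [Fact p.Prime]

lemma termBound (hd : 2 ≤ d) (hm : 1 ≤ m) (a : ℕ) (hadm : a * (d-1) = m + 1)
    (j : Fin n → ℕ) (hj : (∑ k : Fin n, (d ^ (n - k.val) - 1) * j k) = m + 1) :
    padicNorm p (∏ k : Fin n, genBinom ((m : ℚ) / (d : ℚ) ^ (n - k.val)
          - ∑ l ∈ Finset.univ.filter (fun l : Fin n => l < k),
              (d : ℚ) ^ (k.val - l.val) * ((j l : ℕ) : ℚ)) (j k))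
      ≤ (p:ℚ) ^ (((padicValNat p d * a + padicValNat p (Nat.factorial a) : ℕ) : ℤ)
          - (padicValNat p m : ℤ)) := by
  have hp0 : (p:ℚ) ≠ 0 := by exact_mod_cast (Fact.out : p.Prime).ne_zero
  have hp1 : (1:ℚ) < p := by exact_mod_cast (Fact.out : p.Prime).one_lt
  -- the minimal index with j k ≠ 0
  have hTne : (Finset.univ.filter (fun k : Fin n => j k ≠ 0)).Nonempty := by
    by_contra hcon
    rw [Finset.not_nonempty_iff_eq_empty, Finset.filter_eq_empty_iff] at hcon
    simp only [ne_eq, not_not] at hcon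
    have : (∑ k : Fin n, (d ^ (n - k.val) - 1) * j k) = 0 := by
      apply Finset.sum_eq_zero
      intro k hk
      rw [hcon hk, mul_zero]
    omega
  set k0 : Fin n := (Finset.univ.filter (fun k : Fin n => j k ≠ 0)).min' hTne with hk0def
  have hk0mem := (Finset.univ.filter (fun k : Fin n => j k ≠ 0)).min'_mem hTne
  rw [Finset.mem_filter] at hk0mem
  have hjk0 : j k0 ≠ 0 := hk0mem.2
  have hbelow : ∀ l : Fin n, l < k0 → j l = 0 := by
    intro l hl
    by_contra hlne
    have hlmem : l ∈ Finset.univ.filter (fun k : Fin n => j k ≠ 0) := by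
      rw [Finset.mem_filter]; exact ⟨Finset.mem_univ _, hlne⟩
    exact absurd (Finset.min'_le _ _ hlmem) (not_le.mpr hl)
  -- per-factor exponents
  set s : ℤ := (padicValNat p m : ℤ) with hs
  set b : Fin n → ℤ := fun k =>
    (((n - k.val) * padicValNat p d * j k + padicValNat p (Nat.factorial (j k)) : ℕ) : ℤ)
      - (if k = k0 then s else 0) with hb
  have hprod : padicNorm p (∏ k : Fin n, genBinom ((m : ℚ) / (d : ℚ) ^ (n - k.val)
          - ∑ l ∈ Finset.univ.filter (fun l : Fin n => l < k),
              (d : ℚ) ^ (k.val - l.val) * ((j l : ℕ) : ℚ)) (j k))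
      ≤ (p:ℚ) ^ (∑ k : Fin n, b k) := by
    rw [padicNorm_prod, zpow_finset_sum hp0]
    apply Finset.prod_le_prod
    · intro k _; exact padicNorm.nonneg _
    · intro k _
      by_cases hkk : k = k0
      · subst hkk
        simp only [hb, if_pos rfl]
        exact normGB0 d m n p hd hm j k0 hjk0 hbelow
      · simp only [hb, if_neg hkk, sub_zero]
        exact normGB d m n p hd hm j k
  refine le_trans hprod (zpow_le_zpow_right₀ (le_of_lt hp1) ?_)
  -- exponent arithmetic
  have hsum : ∑ k : Fin n, b k
      = ((∑ k : Fin n, ((n - k.val) * padicValNat p d * j k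
            + padicValNat p (Nat.factorial (j k))) : ℕ) : ℤ) - s := by
    rw [hb]
    rw [Finset.sum_sub_distrib]
    congr 1
    · push_cast; rfl
    · rw [Finset.sum_ite_eq' Finset.univ k0 (fun _ => s)]
      simp
  rw [hsum]
  have hd1 : 1 ≤ d - 1 := by omega
  -- (A) sum of (n-k)*j k ≤ a
  have factA : (∑ k : Fin n, (n - k.val) * j k) ≤ a := by
    have hper : ∀ k : Fin n, (n - k.val) * j k * (d - 1) ≤ (d ^ (n - k.val) - 1) * j k := by
      intro k
      have := bern_aux d (n - k.val) hd
      have h2 : (n - k.val) * (d-1) ≤ d ^ (n - k.val) - 1 := by omega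
      calc (n - k.val) * j k * (d - 1) = ((n - k.val) * (d-1)) * j k := by ring
        _ ≤ (d ^ (n - k.val) - 1) * j k := Nat.mul_le_mul_right _ h2
    have hle : (∑ k : Fin n, (n - k.val) * j k) * (d - 1) ≤ m + 1 := by
      rw [← hj, Finset.sum_mul]
      exact Finset.sum_le_sum (fun k _ => hper k)
    rw [← hadm] at hle
    exact Nat.le_of_mul_le_mul_right hle (by omega)
  -- (A') sum of j k ≤ a
  have factS : (∑ k : Fin n, j k) ≤ a := by
    have hper : ∀ k : Fin n, j k * (d - 1) ≤ (d ^ (n - k.val) - 1) * j k := by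
      intro k
      have he : 1 ≤ n - k.val := by have := k.isLt; omega
      have hdp : d ≤ d ^ (n - k.val) := Nat.le_self_pow (by omega) d
      have h2 : d - 1 ≤ d ^ (n - k.val) - 1 := by omega
      calc j k * (d - 1) = (d - 1) * j k := by ring
        _ ≤ (d ^ (n - k.val) - 1) * j k := Nat.mul_le_mul_right _ h2
    have hle : (∑ k : Fin n, j k) * (d - 1) ≤ m + 1 := by
      rw [← hj, Finset.sum_mul]
      exact Finset.sum_le_sum (fun k _ => hper k)
    rw [← hadm] at hle
    exact Nat.le_of_mul_le_mul_right hle (by omega)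
  -- (B) factorial valuations
  have factB : (∑ k : Fin n, padicValNat p (Nat.factorial (j k)))
      ≤ padicValNat p (Nat.factorial a) := by
    rw [← padicValNat_dvd_iff_le (Nat.factorial_ne_zero a), ← Finset.prod_pow_eq_pow_sum]
    calc ∏ k : Fin n, p ^ padicValNat p (Nat.factorial (j k))
        ∣ ∏ k : Fin n, Nat.factorial (j k) :=
          Finset.prod_dvd_prod_of_dvd _ _ (fun k _ => pow_padicValNat_dvd)
      _ ∣ Nat.factorial (∑ k : Fin n, j k) := Nat.prod_factorial_dvd_factorial_sum _ _
      _ ∣ Nat.factorial a := Nat.factorial_dvd_factorial factS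
  -- combine
  have hA : (∑ k : Fin n, ((n - k.val) * padicValNat p d * j k
        + padicValNat p (Nat.factorial (j k))))
      ≤ padicValNat p d * a + padicValNat p (Nat.factorial a) := by
    rw [Finset.sum_add_distrib]
    have : (∑ k : Fin n, (n - k.val) * padicValNat p d * j k)
        = padicValNat p d * (∑ k : Fin n, (n - k.val) * j k) := by
      rw [Finset.mul_sum]
      apply Finset.sum_congr rfl
      intro k _; ring
    rw [this]
    have := Nat.mul_le_mul_left (padicValNat p d) factA
    omega
  have := hA
  omega

end Main

theorem multibrotB_padicValRat_ge (d m n : ℕ) (hd : 2 ≤ d) (hm : 1 ≤ m) (hn : 1 ≤ n)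
    (hdvd : (d - 1) ∣ (m + 1)) (a : ℕ) (ha : a = (m + 1) / (d - 1))
    (p : ℕ) (hp : p.Prime) (hpd : p ∣ d) (t : ℕ) (ht : t = padicValNat p d)
    (hmn : m ≤ d ^ (n + 1) - 3) :
    multibrotB d m n = 0 ∨
      -((padicValNat p (Nat.factorial a) : ℤ) + (t : ℤ) * (a : ℤ))
        ≤ padicValRat p (multibrotB d m n) := by
  by_cases hB : multibrotB d m n = 0
  · exact Or.inl hB
  right
  haveI : Fact p.Prime := ⟨hp⟩
  have hp0 : (p:ℚ) ≠ 0 := by exact_mod_cast hp.ne_zero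
  have hp1 : (1:ℚ) < p := by exact_mod_cast hp.one_lt
  have hadm : a * (d - 1) = m + 1 := by rw [ha]; exact Nat.div_mul_cancel hdvd
  set c : ℤ := (padicValNat p (Nat.factorial a) : ℤ) + (t : ℤ) * (a : ℤ) with hc
  -- the key norm bound
  have key : padicNorm p (multibrotB d m n) ≤ (p:ℚ) ^ c := by
    rw [multibrotB]
    set F : (Fin n → ℕ) → ℚ := fun j =>
      if (∑ k : Fin n, (d ^ (n - k.val) - 1) * j k) = m + 1 then
        ∏ k : Fin n,
          genBinom ((m : ℚ) / (d : ℚ) ^ (n - k.val)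
            - ∑ l ∈ Finset.univ.filter (fun l : Fin n => l < k),
                (d : ℚ) ^ (k.val - l.val) * ((j l : ℕ) : ℚ)) (j k)
      else 0 with hF
    have hsupp : Function.support F ⊆
        ↑(Fintype.piFinset fun _ : Fin n => Finset.range (m+2)) := by
      intro j hj
      simp only [Fintype.coe_piFinset, Set.mem_pi, Set.mem_univ, forall_true_left,
        Finset.coe_range, Set.mem_Iio]
      intro k
      by_contra hcon
      push_neg at hcon
      apply hj
      rw [hF]
      simp only
      rw [if_neg]
      intro hcond
      have he : 1 ≤ n - k.val := by have := k.isLt; omega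
      have hdp : 2 ≤ d ^ (n - k.val) :=
        le_trans hd (Nat.le_self_pow (by omega) d)
      have hsingle : (d ^ (n - k.val) - 1) * j k
          ≤ ∑ k : Fin n, (d ^ (n - k.val) - 1) * j k :=
        Finset.single_le_sum (f := fun k : Fin n => (d ^ (n - k.val) - 1) * j k)
          (fun _ _ => Nat.zero_le _) (Finset.mem_univ k)
      have : m + 2 ≤ (d ^ (n - k.val) - 1) * j k := by
        calc m + 2 ≤ j k := hcon
          _ ≤ (d ^ (n - k.val) - 1) * j k := Nat.le_mul_of_pos_left _ (by omega)
      omega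
    rw [finsum_eq_sum_of_support_subset F hsupp]
    rw [padicNorm.mul, padicNorm.neg, padicNorm.div, padicNorm.one,
      padicNorm_natCast p (by omega : m ≠ 0)]
    have hSum : padicNorm p (∑ j ∈ Fintype.piFinset fun _ : Fin n => Finset.range (m+2), F j)
        ≤ (p:ℚ) ^ (((padicValNat p d * a + padicValNat p (Nat.factorial a) : ℕ) : ℤ)
            - (padicValNat p m : ℤ)) := by
      apply padicNorm.sum_le'
      · intro j _
        rw [hF]
        simp only
        by_cases hcond : (∑ k : Fin n, (d ^ (n - k.val) - 1) * j k) = m + 1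
        · rw [if_pos hcond]
          exact termBound d m n p hd hm a hadm j hcond
        · rw [if_neg hcond, padicNorm.zero]
          positivity
      · positivity
    calc 1 / (p:ℚ) ^ (-(padicValNat p m : ℤ))
            * padicNorm p (∑ j ∈ Fintype.piFinset fun _ : Fin n => Finset.range (m+2), F j)
        ≤ 1 / (p:ℚ) ^ (-(padicValNat p m : ℤ))
            * (p:ℚ) ^ (((padicValNat p d * a + padicValNat p (Nat.factorial a) : ℕ) : ℤ)
                - (padicValNat p m : ℤ)) := by
          apply mul_le_mul_of_nonneg_left hSum (by positivity)
      _ = (p:ℚ) ^ c := by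
          rw [one_div, ← zpow_neg, ← zpow_add₀ hp0]
          congr 1
          rw [hc, ht]
          push_cast
          ring
  -- conclude
  rw [padicNorm.eq_zpow_of_nonzero hB] at key
  have := (zpow_le_zpow_iff_right₀ hp1).mp key
  omega
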